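/- Let G be a commutative group, J a subgroup of G of finite index, ρ a representation of G on a complex vector space V, and χ' : J → ℂˣ a group homomorphism. For a group homomorphism χ : G → ℂˣ let Hom_G(V, ℂ_χ) denote the space of ℂ-linear functionals λ on V satisfying λ(ρ(g)v) = χ(g)·λ(v) for all g ∈ G and v ∈ V, and let Hom_J(V, ℂ_{χ'}) denote the space of ℂ-linear functionals λ on V satisfying λ(ρ(j)v) = χ'(j)·λ(v) for all j ∈ J and v ∈ V. Then Hom_J(V, ℂ_{χ'}) is the internal direct sum, over the (finitely many) homomorphisms χ : G → ℂˣ whose restriction to J equals χ', of the subspaces Hom_G(V, ℂ_χ). -/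

import Mathlib

/-- The space of `(H, χ)`-eigenfunctionals on a representation `(ρ, V)` of `G`:
linear functionals `f` on `V` with `f(ρ(ι h) v) = χ(h) · f(v)` for all `h` in `H`
(`ι : H →* G` being typically a subgroup inclusion or the identity of `G`). -/
def eigenFunctionals {G : Type*} [CommGroup G] {V : Type*} [AddCommGroup V] [Module ℂ V]
    (ρ : Representation ℂ G V) {H : Type*} [Group H] (ι : H →* G) (χ : H →* ℂˣ) :
    Submodule ℂ (Module.Dual ℂ V) where
  carrier := {f | ∀ (h : H) (v : V), f (ρ (ι h) v) = (χ h : ℂ) * f v}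
  add_mem' := by
    intro f g hf hg h v
    simp only [LinearMap.add_apply, hf h v, hg h v, mul_add]
  zero_mem' := by
    intro h v
    simp
  smul_mem' := by
    intro c f hf h v
    simp only [LinearMap.smul_apply, smul_eq_mul, hf h v]
    ring

namespace EigenAux

/-- roots exist in ℂˣ -/
lemma units_pow_surj {n : ℤ} (hn : n ≠ 0) : Function.Surjective (fun u : ℂˣ => u ^ n) := by
  have nat : ∀ m : ℕ, 0 < m → ∀ u : ℂˣ, ∃ w : ℂˣ, w ^ m = u := by
    intro m hm u
    obtain ⟨z, hz⟩ := IsAlgClosed.exists_pow_nat_eq (u : ℂ) hm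
    have hz0 : z ≠ 0 := by
      intro h
      rw [h, zero_pow hm.ne'] at hz
      exact u.ne_zero hz.symm
    exact ⟨Units.mk0 z hz0, Units.ext (by simpa using hz)⟩
  intro u
  rcases hn.lt_or_gt with h | h
  · obtain ⟨w, hw⟩ := nat (-n).toNat (by omega) u
    refine ⟨w⁻¹, ?_⟩
    have : ((-n).toNat : ℤ) = -n := Int.toNat_of_nonneg (by omega)
    show w⁻¹ ^ n = u
    rw [inv_zpow', ← this, zpow_natCast, hw]
  · obtain ⟨w, hw⟩ := nat n.toNat (by omega) u
    refine ⟨w, ?_⟩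
    have : (n.toNat : ℤ) = n := Int.toNat_of_nonneg (by omega)
    show w ^ n = u
    rw [← this, zpow_natCast, hw]

noncomputable instance : DivisibleBy (Additive ℂˣ) ℤ :=
  divisibleByOfSMulRightSurj _ _ (fun {n} hn a => by
    obtain ⟨w, hw⟩ := units_pow_surj hn a.toMul
    have hw' : w ^ n = a.toMul := hw
    exact ⟨Additive.ofMul w, by
      change Additive.ofMul (w ^ n) = a
      rw [hw']; rfl⟩)

lemma exists_extension {G : Type*} [CommGroup G] (J : Subgroup G) (χ' : ↥J →* ℂˣ) :
    ∃ χ : G →* ℂˣ, ∀ j : ↥J, χ (j : G) = χ' j := by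
  have baer : Module.Baer ℤ (Additive ℂˣ) := Module.Baer.of_divisible _
  obtain ⟨h, hh⟩ := baer.extension_property_addMonoidHom
    (MonoidHom.toAdditive J.subtype)
    (fun a b hab => by
      apply Subtype.ext
      exact congrArg Additive.toMul hab)
    (MonoidHom.toAdditive χ')
  refine ⟨MonoidHom.toAdditive.symm h, fun j => ?_⟩
  exact congrArg Additive.toMul (DFunLike.congr_fun hh j)

end EigenAux


namespace EigenAux2

lemma sum_char_eq_zero {Q : Type*} [CommGroup Q] [Fintype Q] {η : Q →* ℂˣ} (hη : η ≠ 1) :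
    ∑ q : Q, (η q : ℂ) = 0 := by
  obtain ⟨x, hx⟩ : ∃ x, η x ≠ (1 : ℂˣ) := by
    by_contra h
    push_neg at h
    exact hη (MonoidHom.ext fun q => h q)
  have key : (η x : ℂ) * ∑ q : Q, (η q : ℂ) = ∑ q : Q, (η q : ℂ) := by
    rw [Finset.mul_sum]
    exact Fintype.sum_equiv (Equiv.mulLeft x) _ _ (fun q => by rw [Equiv.coe_mulLeft, map_mul, Units.val_mul])
  have hx' : (η x : ℂ) ≠ 1 := fun h => hx (Units.ext h)
  have h0 : ((η x : ℂ) - 1) * ∑ q : Q, (η q : ℂ) = 0 := by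
    rw [sub_mul, one_mul, key, sub_self]
  exact (mul_eq_zero.mp h0).resolve_left (sub_ne_zero.mpr hx')

variable (Q : Type*) [CommGroup Q] [Finite Q]

instance : NeZero ((Monoid.exponent Q : ℂ)) :=
  ⟨Nat.cast_ne_zero.mpr Monoid.exponent_ne_zero_of_finite⟩

lemma finite_dual : Finite (Q →* ℂˣ) :=
  Finite.of_equiv Q (CommGroup.monoidHom_mulEquiv_of_hasEnoughRootsOfUnity Q ℂ).some.toEquiv.symm

lemma natCard_dual : Nat.card (Q →* ℂˣ) = Nat.card Q :=
  Nat.card_congr (CommGroup.monoidHom_mulEquiv_of_hasEnoughRootsOfUnity Q ℂ).some.toEquiv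

lemma sum_dual_eq_zero [Fintype (Q →* ℂˣ)] {x : Q} (hx : x ≠ 1) :
    ∑ η : Q →* ℂˣ, (η x : ℂ) = 0 := by
  obtain ⟨η₀, hη₀⟩ := CommGroup.exists_apply_ne_one_of_hasEnoughRootsOfUnity Q ℂ (a := x) hx
  have key : (η₀ x : ℂ) * ∑ η : Q →* ℂˣ, (η x : ℂ) = ∑ η : Q →* ℂˣ, (η x : ℂ) := by
    rw [Finset.mul_sum]
    exact Fintype.sum_equiv (Equiv.mulLeft η₀) _ _ (fun η => by
      rw [Equiv.coe_mulLeft, MonoidHom.mul_apply, Units.val_mul])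
  have hx' : (η₀ x : ℂ) ≠ 1 := fun h => hη₀ (Units.ext h)
  have h0 : ((η₀ x : ℂ) - 1) * ∑ η : Q →* ℂˣ, (η x : ℂ) = 0 := by
    rw [sub_mul, one_mul, key, sub_self]
  exact (mul_eq_zero.mp h0).resolve_left (sub_ne_zero.mpr hx')

end EigenAux2


namespace EigenAux3

variable {G : Type*} [CommGroup G] {V : Type*} [AddCommGroup V] [Module ℂ V]
  (ρ : Representation ℂ G V)

lemma mem_eigen {H : Type*} [Group H] {ι : H →* G} {χ : H →* ℂˣ} {f : Module.Dual ℂ V} :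
    f ∈ eigenFunctionals ρ ι χ ↔ ∀ (h : H) (v : V), f (ρ (ι h) v) = (χ h : ℂ) * f v := Iff.rfl

noncomputable def avg (J : Subgroup G) [Fintype (G ⧸ J)] (χ : G →* ℂˣ) :
    Module.Dual ℂ V →ₗ[ℂ] Module.Dual ℂ V :=
  (J.index : ℂ)⁻¹ • ∑ q : G ⧸ J, ((χ (Quotient.out q) : ℂ))⁻¹ • (ρ (Quotient.out q)).dualMap

lemma avg_apply_apply (J : Subgroup G) [Fintype (G ⧸ J)] (χ : G →* ℂˣ)
    (f : Module.Dual ℂ V) (v : V) :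
    avg ρ J χ f v = (J.index : ℂ)⁻¹ * ∑ q : G ⧸ J,
      (χ (Quotient.out q) : ℂ)⁻¹ * f (ρ (Quotient.out q) v) := by
  simp [avg, LinearMap.sum_apply, Finset.mul_sum]

lemma coset_inv_smul (J : Subgroup G) (χ' : ↥J →* ℂˣ) {f : Module.Dual ℂ V}
    (hf : f ∈ eigenFunctionals ρ J.subtype χ') {χ : G →* ℂˣ}
    (hχ : ∀ j : ↥J, χ (j : G) = χ' j) {x y : G} (hxy : (x : G ⧸ J) = (y : G ⧸ J)) (v : V) :
    (χ x : ℂ)⁻¹ * f (ρ x v) = (χ y : ℂ)⁻¹ * f (ρ y v) := by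
  have hj : x⁻¹ * y ∈ J := QuotientGroup.eq.mp hxy
  set j : ↥J := ⟨x⁻¹ * y, hj⟩ with hjdef
  have hy : y = x * (j : G) := by
    simp [hjdef, mul_inv_cancel_left]
  have h1 : f (ρ y v) = (χ' j : ℂ) * f (ρ x v) := by
    have hxj : ρ y v = ρ (J.subtype j) (ρ x v) := by
      rw [hy, mul_comm x (j : G), map_mul]
      rfl
    rw [hxj]
    exact hf j (ρ x v)
  have h2 : (χ y : ℂ) = (χ x : ℂ) * (χ' j : ℂ) := by
    rw [hy, map_mul, Units.val_mul, hχ j]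
  rw [h1, h2, mul_inv, mul_comm ((χ x : ℂ))⁻¹ _, mul_assoc,
    ← mul_assoc ((χ' j : ℂ))⁻¹, inv_mul_cancel₀ (Units.ne_zero _), one_mul]
  ring

lemma avg_mem (J : Subgroup G) [Fintype (G ⧸ J)] (χ' : ↥J →* ℂˣ) {f : Module.Dual ℂ V}
    (hf : f ∈ eigenFunctionals ρ J.subtype χ') {χ : G →* ℂˣ}
    (hχ : ∀ j : ↥J, χ (j : G) = χ' j) :
    avg ρ J χ f ∈ eigenFunctionals ρ (MonoidHom.id G) χ := by
  intro g v
  show avg ρ J χ f (ρ g v) = (χ g : ℂ) * avg ρ J χ f v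
  rw [avg_apply_apply, avg_apply_apply]
  have key : ∀ q : G ⧸ J, (χ (Quotient.out q) : ℂ)⁻¹ * f (ρ (Quotient.out q) (ρ g v))
      = (χ g : ℂ) * ((χ (Quotient.out (q * (g : G ⧸ J))) : ℂ)⁻¹
          * f (ρ (Quotient.out (q * (g : G ⧸ J))) v)) := by
    intro q
    have h1 : ρ (Quotient.out q) (ρ g v) = ρ (Quotient.out q * g) v := by
      rw [map_mul]; rfl
    have h2 : ((Quotient.out q * g : G) : G ⧸ J)
        = ((Quotient.out (q * (g : G ⧸ J)) : G) : G ⧸ J) := by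
      rw [QuotientGroup.out_eq']
      rw [QuotientGroup.mk_mul, QuotientGroup.out_eq' q]
    have h3 := coset_inv_smul ρ J χ' hf hχ h2 v
    have h4 : (χ (Quotient.out q) : ℂ)⁻¹
        = (χ g : ℂ) * (χ (Quotient.out q * g) : ℂ)⁻¹ := by
      rw [map_mul, Units.val_mul, mul_inv, ← mul_assoc,
        mul_comm ((χ g : ℂ)) _, mul_assoc, mul_inv_cancel₀ (Units.ne_zero _), mul_one]
    rw [h1, h4, mul_assoc, h3]
  rw [Finset.sum_congr rfl (fun q _ => key q), ← Finset.mul_sum]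
  rw [Fintype.sum_equiv (Equiv.mulRight ((g : G ⧸ J)))
    (fun q => (χ (Quotient.out (q * (g : G ⧸ J))) : ℂ)⁻¹
          * f (ρ (Quotient.out (q * (g : G ⧸ J))) v))
    (fun q => (χ (Quotient.out q) : ℂ)⁻¹ * f (ρ (Quotient.out q) v))
    (fun q => rfl)]
  ring

lemma avg_eq_self (J : Subgroup G) [J.FiniteIndex] [Fintype (G ⧸ J)] {χ : G →* ℂˣ}
    {f : Module.Dual ℂ V} (hf : f ∈ eigenFunctionals ρ (MonoidHom.id G) χ) :
    avg ρ J χ f = f := by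
  ext v
  rw [avg_apply_apply]
  have h1 : ∀ q : G ⧸ J,
      (χ (Quotient.out q) : ℂ)⁻¹ * f (ρ (Quotient.out q) v) = f v := by
    intro q
    rw [show f (ρ (Quotient.out q) v) = (χ (Quotient.out q) : ℂ) * f v from hf _ v]
    rw [inv_mul_cancel_left₀ (Units.ne_zero _)]
  rw [Finset.sum_congr rfl (fun q _ => h1 q), Finset.sum_const, Finset.card_univ,
    nsmul_eq_mul]
  have hcard : ((Fintype.card (G ⧸ J) : ℂ)) = (J.index : ℂ) := by
    rw [← Nat.card_eq_fintype_card]; rfl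
  rw [hcard, ← mul_assoc, inv_mul_cancel₀
    (Nat.cast_ne_zero.mpr Subgroup.FiniteIndex.index_ne_zero), one_mul]


lemma avg_eq_zero (J : Subgroup G) [Fintype (G ⧸ J)] (χ' : ↥J →* ℂˣ) {ψ χ : G →* ℂˣ}
    {f : Module.Dual ℂ V} (hf : f ∈ eigenFunctionals ρ (MonoidHom.id G) ψ)
    (hψ : ∀ j : ↥J, ψ (j : G) = χ' j) (hχ : ∀ j : ↥J, χ (j : G) = χ' j) (hne : ψ ≠ χ) :
    avg ρ J χ f = 0 := by
  have hker : J ≤ (ψ * χ⁻¹).ker := fun g hg => by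
    rw [MonoidHom.mem_ker, MonoidHom.mul_apply, MonoidHom.inv_apply, hψ ⟨g, hg⟩, hχ ⟨g, hg⟩, mul_inv_cancel]
  set η := QuotientGroup.lift J (ψ * χ⁻¹) hker with hηdef
  have hη1 : η ≠ 1 := by
    intro h
    apply hne
    ext g
    have h2 : η ((g : G ⧸ J)) = 1 := by rw [h]; rfl
    have h3 : (ψ * χ⁻¹) g = 1 := by
      rw [← h2, hηdef]; rfl
    rw [MonoidHom.mul_apply, MonoidHom.inv_apply, mul_inv_eq_one] at h3
    rw [h3]
  ext v
  rw [LinearMap.zero_apply, avg_apply_apply]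
  have hsummand : ∀ q : G ⧸ J, (χ (Quotient.out q) : ℂ)⁻¹ * f (ρ (Quotient.out q) v)
      = (η q : ℂ) * f v := by
    intro q
    rw [show f (ρ (Quotient.out q) v) = (ψ (Quotient.out q) : ℂ) * f v from hf _ v]
    have h4 : (η q : ℂ) = (ψ (Quotient.out q) : ℂ) * (χ (Quotient.out q) : ℂ)⁻¹ := by
      conv_lhs => rw [← QuotientGroup.out_eq' q]
      rw [hηdef, QuotientGroup.lift_mk, MonoidHom.mul_apply, MonoidHom.inv_apply,
        Units.val_mul, Units.val_inv_eq_inv_val]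
    rw [h4]; ring
  rw [Finset.sum_congr rfl (fun q _ => hsummand q), ← Finset.sum_mul,
    EigenAux2.sum_char_eq_zero hη1, zero_mul, mul_zero]


section Ext

variable (J : Subgroup G) (χ' : ↥J →* ℂˣ)

noncomputable def extEquiv (χ₀ : G →* ℂˣ) (hχ₀ : ∀ j : ↥J, χ₀ (j : G) = χ' j) :
    ((G ⧸ J) →* ℂˣ) ≃ {χ : G →* ℂˣ // ∀ j : ↥J, χ (j : G) = χ' j} :=
  Equiv.ofBijective
    (fun η => ⟨χ₀ * η.comp (QuotientGroup.mk' J), fun j => by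
      have h1 : (QuotientGroup.mk' J) (j : G) = 1 := (QuotientGroup.eq_one_iff _).mpr j.2
      rw [MonoidHom.mul_apply, MonoidHom.comp_apply, h1, map_one, mul_one, hχ₀ j]⟩)
    ⟨fun η₁ η₂ h => by
      have hval := congrArg Subtype.val h
      ext q
      have h3 := DFunLike.congr_fun hval q
      simp only [MonoidHom.mul_apply, MonoidHom.comp_apply,
        QuotientGroup.mk'_apply] at h3
      have h4 := mul_left_cancel h3
      simpa using congrArg Units.val h4,
     fun χ => by
      have hker : J ≤ (χ.1 * χ₀⁻¹).ker := fun g hg => by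
        rw [MonoidHom.mem_ker, MonoidHom.mul_apply, MonoidHom.inv_apply, χ.2 ⟨g, hg⟩, hχ₀ ⟨g, hg⟩,
          mul_inv_cancel]
      refine ⟨QuotientGroup.lift J (χ.1 * χ₀⁻¹) hker, ?_⟩
      apply Subtype.ext
      refine MonoidHom.ext fun g => ?_
      show (χ₀ g : ℂˣ) * (QuotientGroup.lift J (χ.1 * χ₀⁻¹) hker)
        ((QuotientGroup.mk' J) g) = χ.1 g
      rw [QuotientGroup.mk'_apply, QuotientGroup.lift_mk, MonoidHom.mul_apply,
        MonoidHom.inv_apply, mul_comm ((χ : G →* ℂˣ) g) _, ← mul_assoc,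
        mul_inv_cancel, one_mul]⟩

lemma finite_ext [J.FiniteIndex] (χ₀ : G →* ℂˣ) (hχ₀ : ∀ j : ↥J, χ₀ (j : G) = χ' j) :
    Finite {χ : G →* ℂˣ // ∀ j : ↥J, χ (j : G) = χ' j} := by
  have : Finite ((G ⧸ J) →* ℂˣ) := EigenAux2.finite_dual (G ⧸ J)
  exact Finite.of_equiv _ (extEquiv J χ' χ₀ hχ₀)

lemma natCard_ext [J.FiniteIndex] (χ₀ : G →* ℂˣ) (hχ₀ : ∀ j : ↥J, χ₀ (j : G) = χ' j) :
    Nat.card {χ : G →* ℂˣ // ∀ j : ↥J, χ (j : G) = χ' j} = J.index := by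
  rw [← Nat.card_congr (extEquiv J χ' χ₀ hχ₀), EigenAux2.natCard_dual]
  rfl

lemma sum_ext_inv [J.FiniteIndex] [Fintype {χ : G →* ℂˣ // ∀ j : ↥J, χ (j : G) = χ' j}]
    (χ₀ : G →* ℂˣ) (hχ₀ : ∀ j : ↥J, χ₀ (j : G) = χ' j) (g : G) (hg : g ∉ J) :
    ∑ χ : {χ : G →* ℂˣ // ∀ j : ↥J, χ (j : G) = χ' j}, ((χ.1 g : ℂ))⁻¹ = 0 := by
  have hfd : Finite ((G ⧸ J) →* ℂˣ) := EigenAux2.finite_dual (G ⧸ J)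
  letI : Fintype ((G ⧸ J) →* ℂˣ) := Fintype.ofFinite _
  rw [← Equiv.sum_comp (extEquiv J χ' χ₀ hχ₀) (fun χ => ((χ.1 g : ℂ))⁻¹)]
  have hterm : ∀ η : (G ⧸ J) →* ℂˣ,
      (((extEquiv J χ' χ₀ hχ₀ η).1 g : ℂ))⁻¹
        = (χ₀ g : ℂ)⁻¹ * ((η (((g : G ⧸ J))⁻¹) : ℂ)) := by
    intro η
    show (((χ₀ * η.comp (QuotientGroup.mk' J)) g : ℂˣ) : ℂ)⁻¹ = _
    rw [MonoidHom.mul_apply, Units.val_mul, mul_inv, map_inv, Units.val_inv_eq_inv_val]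
    rfl
  rw [Finset.sum_congr rfl (fun η _ => hterm η), ← Finset.mul_sum]
  have hx : ((g : G ⧸ J))⁻¹ ≠ 1 := by
    intro h
    rw [inv_eq_one, QuotientGroup.eq_one_iff] at h
    exact hg h
  rw [EigenAux2.sum_dual_eq_zero _ hx, mul_zero]

lemma sum_avg [J.FiniteIndex] [Fintype (G ⧸ J)]
    [Fintype {χ : G →* ℂˣ // ∀ j : ↥J, χ (j : G) = χ' j}]
    (hcard : Nat.card {χ : G →* ℂˣ // ∀ j : ↥J, χ (j : G) = χ' j} = J.index)
    (hsum0 : ∀ g : G, g ∉ J →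
      ∑ χ : {χ : G →* ℂˣ // ∀ j : ↥J, χ (j : G) = χ' j}, ((χ.1 g : ℂ))⁻¹ = 0)
    {f : Module.Dual ℂ V} (hf : f ∈ eigenFunctionals ρ J.subtype χ') :
    ∑ χ : {χ : G →* ℂˣ // ∀ j : ↥J, χ (j : G) = χ' j}, avg ρ J χ.1 f = f := by
  ext v
  rw [LinearMap.sum_apply]
  have step1 : ∀ χ : {χ : G →* ℂˣ // ∀ j : ↥J, χ (j : G) = χ' j}, avg ρ J χ.1 f v = ∑ q : G ⧸ J,
      (J.index : ℂ)⁻¹ * ((χ.1 (Quotient.out q) : ℂ)⁻¹ * f (ρ (Quotient.out q) v)) := by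
    intro χ
    rw [avg_apply_apply, Finset.mul_sum]
  rw [Finset.sum_congr rfl (fun χ _ => step1 χ), Finset.sum_comm]
  have hq0 : ∀ q : G ⧸ J, q ≠ 1 → (∑ χ : {χ : G →* ℂˣ // ∀ j : ↥J, χ (j : G) = χ' j},
      (J.index : ℂ)⁻¹ * ((χ.1 (Quotient.out q) : ℂ)⁻¹ * f (ρ (Quotient.out q) v))) = 0 := by
    intro q hq1
    have hout : Quotient.out q ∉ J := by
      intro hmem
      apply hq1
      rw [← QuotientGroup.out_eq' q]
      exact (QuotientGroup.eq_one_iff _).mpr hmem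
    have hr : ∀ χ : {χ : G →* ℂˣ // ∀ j : ↥J, χ (j : G) = χ' j}, (J.index : ℂ)⁻¹ * ((χ.1 (Quotient.out q) : ℂ)⁻¹
        * f (ρ (Quotient.out q) v)) = (χ.1 (Quotient.out q) : ℂ)⁻¹
        * ((J.index : ℂ)⁻¹ * f (ρ (Quotient.out q) v)) := fun χ => by ring
    rw [Finset.sum_congr rfl (fun χ _ => hr χ), ← Finset.sum_mul, hsum0 _ hout, zero_mul]
  rw [Finset.sum_eq_single_of_mem (1 : G ⧸ J) (Finset.mem_univ _)
    (fun q _ hq1 => hq0 q hq1)]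
  have h1 : Quotient.out (1 : G ⧸ J) ∈ J :=
    (QuotientGroup.eq_one_iff _).mp (QuotientGroup.out_eq' 1)
  have hfj : f (ρ (Quotient.out (1 : G ⧸ J)) v)
      = (χ' ⟨Quotient.out (1 : G ⧸ J), h1⟩ : ℂ) * f v := hf ⟨Quotient.out (1 : G ⧸ J), h1⟩ v
  have hterm : ∀ χ : {χ : G →* ℂˣ // ∀ j : ↥J, χ (j : G) = χ' j}, (J.index : ℂ)⁻¹ * ((χ.1 (Quotient.out (1 : G ⧸ J)) : ℂ)⁻¹
      * f (ρ (Quotient.out (1 : G ⧸ J)) v)) = (J.index : ℂ)⁻¹ * f v := by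
    intro χ
    rw [show χ.1 (Quotient.out (1 : G ⧸ J)) = χ' ⟨Quotient.out (1 : G ⧸ J), h1⟩ from
      χ.2 ⟨Quotient.out (1 : G ⧸ J), h1⟩, hfj,
      inv_mul_cancel_left₀ (Units.ne_zero _)]
  rw [Finset.sum_congr rfl (fun χ _ => hterm χ), Finset.sum_const, Finset.card_univ,
    nsmul_eq_mul, ← Nat.card_eq_fintype_card, hcard, ← mul_assoc,
    mul_inv_cancel₀ (Nat.cast_ne_zero.mpr Subgroup.FiniteIndex.index_ne_zero), one_mul]

end Ext

end EigenAux3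


/-- Lemma 3.5 of the paper, abstractly: for a representation `ρ` of a commutative group `G`
on a complex vector space `V`, a finite-index subgroup `J` of `G`, and a character
`χ' : J → ℂˣ`, the set of characters of `G` extending `χ'` is finite, and the space
`Hom_J(V, ℂ_{χ'})` of `(J, χ')`-eigenfunctionals is the internal direct sum of the
subspaces `Hom_G(V, ℂ_χ)` over the extensions `χ` of `χ'` to `G`. -/
theorem eigenFunctionals_directSum
    {G : Type*} [CommGroup G] {V : Type*} [AddCommGroup V] [Module ℂ V]
    (ρ : Representation ℂ G V) (J : Subgroup G) [J.FiniteIndex] (χ' : ↥J →* ℂˣ) :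
    Finite {χ : G →* ℂˣ // ∀ j : J, χ (j : G) = χ' j} ∧
    iSupIndep (fun χ : {χ : G →* ℂˣ // ∀ j : J, χ (j : G) = χ' j} =>
      eigenFunctionals ρ (MonoidHom.id G) χ.1) ∧
    (⨆ χ : {χ : G →* ℂˣ // ∀ j : J, χ (j : G) = χ' j},
        eigenFunctionals ρ (MonoidHom.id G) χ.1) = eigenFunctionals ρ J.subtype χ' := by
  classical
  obtain ⟨χ₀, hχ₀⟩ := EigenAux.exists_extension J χ'
  have hfin : Finite {χ : G →* ℂˣ // ∀ j : J, χ (j : G) = χ' j} :=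
    EigenAux3.finite_ext J χ' χ₀ hχ₀
  letI : Fintype (G ⧸ J) := Fintype.ofFinite _
  letI : Fintype {χ : G →* ℂˣ // ∀ j : J, χ (j : G) = χ' j} := Fintype.ofFinite _
  refine ⟨hfin, ?_, ?_⟩
  · intro χ
    refine Submodule.disjoint_def.mpr fun f hf1 hf2 => ?_
    have hker : (⨆ ψ, ⨆ (_ : ψ ≠ χ),
        eigenFunctionals ρ (MonoidHom.id G) (ψ : {χ : G →* ℂˣ // ∀ j : J, χ (j : G) = χ' j}).1)
        ≤ LinearMap.ker (EigenAux3.avg ρ J χ.1) := by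
      refine iSup_le fun ψ => iSup_le fun hψ => fun g hg => ?_
      exact LinearMap.mem_ker.mpr
        (EigenAux3.avg_eq_zero ρ J χ' hg ψ.2 χ.2 fun h => hψ (Subtype.ext h))
    have h0 : EigenAux3.avg ρ J χ.1 f = 0 := LinearMap.mem_ker.mp (hker hf2)
    have h1 : EigenAux3.avg ρ J χ.1 f = f := EigenAux3.avg_eq_self ρ J hf1
    rw [← h1, h0]
  · apply le_antisymm
    · refine iSup_le fun χ => fun f hf => ?_
      intro j v
      have h := hf (j : G) v
      rw [χ.2 j] at h
      exact h
    · intro f hf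
      have hdecomp := EigenAux3.sum_avg ρ J χ' (EigenAux3.natCard_ext J χ' χ₀ hχ₀)
        (fun g hg => EigenAux3.sum_ext_inv J χ' χ₀ hχ₀ g hg) hf
      rw [← hdecomp]
      apply Submodule.sum_mem
      intro χ _
      exact le_iSup (fun χ : {χ : G →* ℂˣ // ∀ j : J, χ (j : G) = χ' j} =>
          eigenFunctionals ρ (MonoidHom.id G) χ.1) χ
        (EigenAux3.avg_mem ρ J χ' hf χ.2)
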